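/- Let D ⊆ ℝⁿ be a compact convex set, a ∈ int D, c ∈ ℝ, and ψ : D → ℝ a convex function with ψ(x) = c for all x in the boundary of D and with Stp(ψ) ≤ M for some finite M ≥ 0. Let p ∈ ℝ satisfy c − p > M·r, where r = sup{‖x − a‖ : x ∈ bdry D}. Then the graph G = {(x, ψ(x)) : x ∈ D} (and hence its convex hull) is contained in the truncated cone trunc((a, p), T), where T = {(x, c) : x ∈ D}. -/

import Mathlib

set_option linter.unusedVariables false

lemma frontier_ray {E : Type*} [NormedAddCommGroup E] [NormedSpace ℝ E]
    {D : Set E} (hDc : IsCompact D) {x : E} (hx : x ∈ D) {d : E} (hd : d ≠ 0) :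
    ∃ t : ℝ, 0 ≤ t ∧ x + t • d ∈ frontier D := by
  set S : Set ℝ := {t : ℝ | 0 ≤ t ∧ x + t • d ∈ D} with hS
  have hS0 : (0:ℝ) ∈ S := ⟨le_refl 0, by simpa using hx⟩
  obtain ⟨R, hR⟩ := hDc.isBounded.subset_closedBall 0
  have hdpos : 0 < ‖d‖ := norm_pos_iff.mpr hd
  have hSsub : S ⊆ Set.Icc 0 ((R + ‖x‖) / ‖d‖) := by
    intro t ⟨ht0, htD⟩
    refine ⟨ht0, ?_⟩
    have h1 : ‖x + t • d‖ ≤ R := by simpa [Metric.mem_closedBall] using hR htD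
    have h2 : t * ‖d‖ = ‖t • d‖ := by rw [norm_smul, Real.norm_eq_abs, abs_of_nonneg ht0]
    have h3 : ‖t • d‖ ≤ ‖x + t • d‖ + ‖x‖ := by
      have := norm_add_le (x + t • d) (-x); simpa using this
    rw [le_div_iff₀ hdpos]
    nlinarith
  have hSclosed : IsClosed S := by
    have : S = Set.Ici (0:ℝ) ∩ (fun t : ℝ => x + t • d) ⁻¹' D := by
      ext t; simp [hS, Set.mem_Ici, and_comm]
    rw [this]
    exact isClosed_Ici.inter (hDc.isClosed.preimage (by continuity))
  have hScpt : IsCompact S := isCompact_Icc.of_isClosed_subset hSclosed hSsub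
  have hT : sSup S ∈ S := hScpt.sSup_mem ⟨0, hS0⟩
  set T := sSup S
  refine ⟨T, hT.1, ?_⟩
  rw [hDc.isClosed.frontier_eq]
  refine ⟨hT.2, ?_⟩
  intro hint
  obtain ⟨ε, hε, hball⟩ := Metric.mem_nhds_iff.mp (mem_interior_iff_mem_nhds.mp hint)
  set t' := T + ε / (2 * ‖d‖)
  have ht'S : t' ∈ S := by
    have hT0 := hT.1
    refine ⟨by positivity, hball ?_⟩
    have : x + t' • d - (x + T • d) = (ε / (2 * ‖d‖)) • d := by
      simp [t', add_smul]
    rw [Metric.mem_ball, dist_eq_norm, this, norm_smul, Real.norm_eq_abs,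
      abs_of_nonneg (by positivity)]
    rw [div_mul_eq_mul_div, mul_comm]
    rw [div_lt_iff₀ (by positivity)]
    nlinarith
  have := le_csSup (hScpt.bddAbove) ht'S
  have : ε / (2 * ‖d‖) ≤ 0 := by linarith [show T = sSup S from rfl, show t' = T + ε / (2 * ‖d‖) from rfl]
  nlinarith [div_pos hε (by positivity : (0:ℝ) < 2 * ‖d‖)]

lemma psi_le_boundary {E : Type*} [NormedAddCommGroup E] [NormedSpace ℝ E]
    {D : Set E} (hDc : IsCompact D) {ψ : E → ℝ} {c : ℝ}
    (hψ : ConvexOn ℝ D ψ) (hconst : ∀ x ∈ frontier D, ψ x = c)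
    {d : E} (hd : d ≠ 0) {x : E} (hx : x ∈ D) : ψ x ≤ c := by
  by_cases hxf : x ∈ frontier D
  · exact le_of_eq (hconst x hxf)
  have hfrsub : frontier D ⊆ D := hDc.isClosed.frontier_subset
  obtain ⟨tp, htp, hy₂⟩ := frontier_ray hDc hx hd
  obtain ⟨tm, htm, hy₁⟩ := frontier_ray hDc hx (neg_ne_zero.mpr hd)
  have htp' : 0 < tp := lt_of_le_of_ne htp (fun h => hxf (by simpa [← h] using hy₂))
  have htm' : 0 < tm := lt_of_le_of_ne htm (fun h => hxf (by simpa [← h] using hy₁))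
  set μ : ℝ := tp / (tp + tm) with hμ
  have hsum : 0 < tp + tm := by linarith
  have hμ0 : 0 ≤ μ := by positivity
  have hμ1 : 0 ≤ 1 - μ := by
    rw [hμ]; rw [sub_nonneg, div_le_one hsum]; linarith
  have key : (1 - μ) * tp - μ * tm = 0 := by
    have hμm : μ * (tp + tm) = tp := by rw [hμ]; exact div_mul_cancel₀ tp (ne_of_gt hsum)
    field_simp [hμ]
    linear_combination (-1 : ℝ) * hμm
  have hxeq : μ • (x + tm • (-d)) + (1 - μ) • (x + tp • d) = x := by
    have h1 : μ • (x + tm • (-d)) + (1 - μ) • (x + tp • d)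
        = x + ((1 - μ) * tp - μ * tm) • d := by module
    rw [h1, key]; simp
  have := hψ.2 (hfrsub hy₁) (hfrsub hy₂) hμ0 hμ1 (by ring)
  rw [hxeq, hconst _ hy₁, hconst _ hy₂, smul_eq_mul, smul_eq_mul] at this
  linarith [this]

/-- the graph of ψ (and hence its convex hull) is contained in the truncated cone trunc((a,p), T). -/
theorem statement_16 (n : ℕ) (hn : 1 ≤ n)
    (D : Set (EuclideanSpace ℝ (Fin n)))
    (hDcpt : IsCompact D) (hDconv : Convex ℝ D)
    (a : EuclideanSpace ℝ (Fin n)) (ha : a ∈ interior D)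
    (c : ℝ)
    (ψ : EuclideanSpace ℝ (Fin n) → ℝ) (hψ_conv : ConvexOn ℝ D ψ)
    (hconst : ∀ x ∈ frontier D, ψ x = c)
    (M : ℝ) (hM : 0 ≤ M) (hstp : ∀ u ∈ D, ∀ v ∈ D, |ψ v - ψ u| ≤ M * ‖v - u‖)
    (r : ℝ) (hr : r = sSup ((fun x => ‖x - a‖) '' frontier D))
    (p : ℝ) (hp : M * r < c - p) :
    {z : EuclideanSpace ℝ (Fin n) × ℝ | ∃ x ∈ D, z = (x, ψ x)} ⊆
        convexHull ℝ ({((a, p) : EuclideanSpace ℝ (Fin n) × ℝ)} ∪ ((fun x => (x, c)) '' D)) ∧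
      convexHull ℝ {z : EuclideanSpace ℝ (Fin n) × ℝ | ∃ x ∈ D, z = (x, ψ x)} ⊆
        convexHull ℝ ({((a, p) : EuclideanSpace ℝ (Fin n) × ℝ)} ∪ ((fun x => (x, c)) '' D)) := by
  haveI : Nonempty (Fin n) := ⟨⟨0, hn⟩⟩
  set d0 : EuclideanSpace ℝ (Fin n) := EuclideanSpace.single (⟨0, hn⟩ : Fin n) 1 with hd0def
  have hd0 : d0 ≠ 0 := by
    intro h
    have : (d0 : EuclideanSpace ℝ (Fin n)) ⟨0, hn⟩ = 0 := by rw [h]; rfl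
    simp [hd0def, EuclideanSpace.single_apply] at this
  have haD : a ∈ D := interior_subset ha
  have hfrsub : frontier D ⊆ D := hDcpt.isClosed.frontier_subset
  have hfr_cpt : IsCompact (frontier D) := hDcpt.of_isClosed_subset isClosed_frontier hfrsub
  obtain ⟨t0, _, hfr0⟩ := frontier_ray hDcpt haD hd0
  have hbdd : BddAbove ((fun x => ‖x - a‖) '' frontier D) :=
    (hfr_cpt.image (by continuity)).bddAbove
  have hrbound : ∀ y ∈ frontier D, ‖y - a‖ ≤ r := fun y hy =>
    hr ▸ le_csSup hbdd ⟨y, hy, rfl⟩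
  have hr0 : 0 ≤ r := le_trans (norm_nonneg _) (hrbound _ hfr0)
  set Q : Set (EuclideanSpace ℝ (Fin n) × ℝ) :=
    ({((a, p) : EuclideanSpace ℝ (Fin n) × ℝ)} ∪ ((fun x => (x, c)) '' D)) with hQ
  have hconvQ : Convex ℝ (convexHull ℝ Q) := convex_convexHull ℝ Q
  have hAmem : ((a, p) : EuclideanSpace ℝ (Fin n) × ℝ) ∈ convexHull ℝ Q :=
    subset_convexHull ℝ Q (Or.inl rfl)
  have hTmem : ∀ y ∈ D, ((y, c) : EuclideanSpace ℝ (Fin n) × ℝ) ∈ convexHull ℝ Q :=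
    fun y hy => subset_convexHull ℝ Q (Or.inr ⟨y, hy, rfl⟩)
  have key : ∀ x ∈ D, ((x, ψ x) : EuclideanSpace ℝ (Fin n) × ℝ) ∈ convexHull ℝ Q := by
    intro x hx
    -- find λ ∈ [0,1) and a frontier point y with x = (1-λ)•a + λ•y
    by_cases hxf : x ∈ frontier D
    · rw [hconst x hxf]; exact hTmem x hx
    obtain ⟨y, hyfr, l, hl0, hl1, hxeq⟩ :
        ∃ y ∈ frontier D, ∃ l : ℝ, 0 ≤ l ∧ l < 1 ∧ x = (1 - l) • a + l • y := by
      by_cases hxa : x = a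
      · exact ⟨_, hfr0, 0, le_refl 0, one_pos, by simp [hxa]⟩
      · have hdxa : x - a ≠ 0 := sub_ne_zero.mpr hxa
        obtain ⟨t, ht0, hyfr⟩ := frontier_ray hDcpt hx hdxa
        have ht0' : 0 < t := lt_of_le_of_ne ht0 (fun h => hxf (by simpa [← h] using hyfr))
        refine ⟨_, hyfr, 1 / (1 + t), by positivity, ?_, ?_⟩
        · rw [div_lt_one (by linarith)]; linarith
        · have h1t : (1 : ℝ) + t ≠ 0 := by positivity
          have he2 : (1/(1+t)) * (1 + t) = 1 := by field_simp
          have : (1 - 1/(1+t)) • a + (1/(1+t)) • (x + t • (x - a))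
              = ((1 - 1/(1+t)) - (1/(1+t)) * t) • a + ((1/(1+t)) * (1 + t)) • x := by
            module
          rw [this, he2, one_smul]
          have hc0 : (1 - 1/(1+t)) - (1/(1+t)) * t = 0 := by field_simp; ring
          rw [hc0, zero_smul, zero_add]
    have hyD : y ∈ D := hfrsub hyfr
    have hψy : ψ y = c := hconst y hyfr
    -- upper bound
    have hub : ψ x ≤ c := psi_le_boundary hDcpt hψ_conv hconst hd0 hx
    -- lower bound
    have hxy : x - y = (1 - l) • (a - y) := by rw [hxeq]; module
    have hnxy : ‖x - y‖ = (1 - l) * ‖a - y‖ := by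
      rw [hxy, norm_smul, Real.norm_eq_abs, abs_of_nonneg (by linarith)]
    have hay : ‖a - y‖ ≤ r := by
      have := hrbound y hyfr
      rwa [← norm_neg, neg_sub] at this
    have hstp' := hstp y hyD x hx
    have hlb : c - M * ((1 - l) * r) ≤ ψ x := by
      rw [hψy] at hstp'
      have h1 : ψ x - c ≥ -(M * ‖x - y‖) := neg_le_of_abs_le hstp' |>.trans_eq rfl
      have h2 : M * ‖x - y‖ ≤ M * ((1 - l) * r) := by
        rw [hnxy]
        apply mul_le_mul_of_nonneg_left _ hM
        apply mul_le_mul_of_nonneg_left hay (by linarith)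
      linarith [abs_le.mp hstp' |>.1]
    set h₀ : ℝ := (1 - l) * p + l * c with hh₀
    have hh₀le : h₀ ≤ ψ x := by nlinarith
    have hch₀ : 0 < c - h₀ := by nlinarith
    -- the point (x, h₀) is in the hull
    have hP₀ : ((x, h₀) : EuclideanSpace ℝ (Fin n) × ℝ) ∈ convexHull ℝ Q := by
      have := hconvQ hAmem (hTmem y hyD) (by linarith : (0:ℝ) ≤ 1 - l) hl0 (by ring)
      convert this using 1
      rw [Prod.ext_iff]
      constructor
      · simpa using hxeq
      · simp [hh₀, Prod.smul_def]
    have hC : ((x, c) : EuclideanSpace ℝ (Fin n) × ℝ) ∈ convexHull ℝ Q := hTmem x hx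
    set s : ℝ := (c - ψ x) / (c - h₀) with hs
    have hs0 : 0 ≤ s := div_nonneg (by linarith) (by linarith)
    have hs1 : 0 ≤ 1 - s := by
      rw [sub_nonneg, hs, div_le_one hch₀]; linarith
    have := hconvQ hP₀ hC hs0 hs1 (by ring)
    convert this using 1
    rw [Prod.ext_iff]
    constructor
    · show x = s • x + (1 - s) • x
      rw [← add_smul]; simp
    · show ψ x = s * h₀ + (1 - s) * c
      rw [hs]; field_simp; ring
  constructor
  · rintro z ⟨x, hx, rfl⟩
    exact key x hx
  · apply convexHull_min _ hconvQ
    rintro z ⟨x, hx, rfl⟩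
    exact key x hx
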